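/- Fix a class c with logit l_c distributed as a Gaussian N(μ_c, σ_c²) with σ_c > 0, and fix the remaining logits l_i ∈ ℝ for i ≠ c. For β > 0 and τ ∈ (0,1), the probability that the softmax confidence of class c exceeds τ, i.e. P( exp(β·l_c)/(exp(β·l_c) + Σ_{i≠c} exp(β·l_i)) > τ ), equals Φ( (1/σ_c)·( μ_c − (1/β)·log(τ/(1−τ)) − (1/β)·log( Σ_{i≠c} exp(β·l_i) ) ) ), where Φ is the cumulative distribution function of the standard normal distribution. -/

import Mathlib

open Finset ProbabilityTheory MeasureTheory

/-- The standard normal cumulative distribution function `Φ`. -/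
noncomputable def stdNormalCDF (x : ℝ) : ℝ :=
  (ProbabilityTheory.gaussianReal 0 1 (Set.Iic x)).toReal

/-- Class Probability Distribution (Lemma 3.1, multi-class form): if the logit of class `c`
is Gaussian `N(μ_c, σ_c²)` and the remaining logits `l i` (for `i ≠ c`) are fixed, then the
probability that the softmax confidence of class `c` (with inverse-temperature `β > 0`)
exceeds `τ ∈ (0,1)` equals
`Φ((1/σ_c)·(μ_c − (1/β)·log(τ/(1−τ)) − (1/β)·log(Σ_{i≠c} exp(β·l i))))`. -/
lemma std_map_affine (σ μ : ℝ) :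
    (gaussianReal 0 1).map (fun x ↦ σ * x + μ) = gaussianReal μ (Real.toNNReal (σ ^ 2)) := by
  have h1 : (gaussianReal 0 1).map (σ * ·) = gaussianReal 0 (⟨σ^2, sq_nonneg σ⟩ * 1) := by
    rw [gaussianReal_map_const_mul]; congr 1; simp
  have hcomp : (gaussianReal 0 1).map (fun x ↦ σ * x + μ)
      = ((gaussianReal 0 1).map (σ * ·)).map (· + μ) := by
    rw [Measure.map_map (measurable_id'.add_const μ) (measurable_id'.const_mul σ)]
    rfl
  rw [hcomp, h1, gaussianReal_map_add_const]
  congr 1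
  · simp
  · ext
    simp [Real.coe_toNNReal _ (sq_nonneg σ)]
    exact mul_one (σ ^ 2)

lemma std_Ioi_eq_Iic (a : ℝ) :
    gaussianReal (0:ℝ) 1 (Set.Ioi a) = gaussianReal (0:ℝ) 1 (Set.Iic (-a)) := by
  have hneg : (gaussianReal (0:ℝ) 1).map (fun x ↦ -x) = gaussianReal (0:ℝ) 1 := by
    have h := gaussianReal_map_const_mul (μ := (0:ℝ)) (v := 1) (-1)
    simp only [neg_one_mul, mul_zero, neg_zero] at h
    rw [h]
    congr 1
    ext
    simp
  have h1 : gaussianReal (0:ℝ) 1 (Set.Iic (-a))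
      = gaussianReal (0:ℝ) 1 (Set.Ici a) := by
    conv_lhs => rw [← hneg]
    rw [Measure.map_apply measurable_neg measurableSet_Iic]
    congr 1
    ext x
    simp
  have h0 : gaussianReal (0:ℝ) 1 {a} = 0 := by
    refine gaussianReal_absolutelyContinuous 0 (by norm_num) ?_
    simp
  rw [h1, ← Set.Ioi_insert]
  refine le_antisymm (measure_mono (Set.subset_insert _ _)) ?_
  calc gaussianReal (0:ℝ) 1 (insert a (Set.Ioi a))
      ≤ gaussianReal (0:ℝ) 1 {a} + gaussianReal (0:ℝ) 1 (Set.Ioi a) := by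
        rw [Set.insert_eq]; exact measure_union_le _ _
    _ = gaussianReal (0:ℝ) 1 (Set.Ioi a) := by rw [h0, zero_add]

theorem gaussian_softmax_acceptance_prob (C : ℕ) (hC : 2 ≤ C) (c : Fin C)
    (μc σc β τ : ℝ) (hσ : 0 < σc) (hβ : 0 < β) (hτ : τ ∈ Set.Ioo (0 : ℝ) 1)
    (l : Fin C → ℝ) :
    ((ProbabilityTheory.gaussianReal μc (Real.toNNReal (σc ^ 2)))
        {x : ℝ | Real.exp (β * x) /
            (Real.exp (β * x) + ∑ i ∈ Finset.univ.erase c, Real.exp (β * l i)) > τ}).toReal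
      = stdNormalCDF ((1 / σc) * (μc - (1 / β) * Real.log (τ / (1 - τ))
          - (1 / β) * Real.log (∑ i ∈ Finset.univ.erase c, Real.exp (β * l i)))) := by
  obtain ⟨hτ0, hτ1⟩ := hτ
  set S : ℝ := ∑ i ∈ Finset.univ.erase c, Real.exp (β * l i) with hSdef
  have hSpos : 0 < S := by
    refine Finset.sum_pos (fun i _ ↦ Real.exp_pos _) ?_
    rw [← Finset.card_pos, Finset.card_erase_of_mem (Finset.mem_univ c), Finset.card_univ,
      Fintype.card_fin]
    omega
  have h1τ : 0 < 1 - τ := by linarith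
  set t : ℝ := (Real.log (τ / (1 - τ)) + Real.log S) / β with htdef
  -- the event is {x | x > t}
  have hset : {x : ℝ | Real.exp (β * x) / (Real.exp (β * x) + S) > τ} = Set.Ioi t := by
    ext x
    have he : 0 < Real.exp (β * x) := Real.exp_pos _
    have hden : 0 < Real.exp (β * x) + S := by linarith
    simp only [Set.mem_setOf_eq, Set.mem_Ioi, gt_iff_lt]
    rw [lt_div_iff₀ hden]
    constructor
    · intro h
      have h2 : τ / (1 - τ) * S < Real.exp (β * x) := by
        rw [div_mul_eq_mul_div, div_lt_iff₀ h1τ]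
        nlinarith
      have h3 : β * t < β * x := by
        have : Real.exp (β * t) = τ / (1 - τ) * S := by
          rw [htdef, mul_div_cancel₀ _ hβ.ne', Real.exp_add, Real.exp_log (by positivity),
            Real.exp_log hSpos]
        rw [← Real.exp_lt_exp, this]
        exact h2
      exact lt_of_mul_lt_mul_left h3 hβ.le
    · intro h
      have h3 : β * t < β * x := by exact mul_lt_mul_of_pos_left h hβ
      have h2 : τ / (1 - τ) * S < Real.exp (β * x) := by
        have : Real.exp (β * t) = τ / (1 - τ) * S := by
          rw [htdef, mul_div_cancel₀ _ hβ.ne', Real.exp_add, Real.exp_log (by positivity),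
            Real.exp_log hSpos]
        rw [← this]
        exact Real.exp_lt_exp.mpr h3
      rw [div_mul_eq_mul_div, div_lt_iff₀ h1τ] at h2
      nlinarith
  rw [hset, ← std_map_affine σc μc,
    Measure.map_apply (by fun_prop) measurableSet_Ioi]
  have hpre : (fun x ↦ σc * x + μc) ⁻¹' Set.Ioi t = Set.Ioi ((t - μc) / σc) := by
    ext x
    simp only [Set.mem_preimage, Set.mem_Ioi]
    rw [div_lt_iff₀ hσ]
    constructor <;> intro h <;> nlinarith
  rw [hpre, std_Ioi_eq_Iic]
  unfold stdNormalCDF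
  congr 2
  rw [htdef]
  field_simp
  ring
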